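/- For each positive integer n, the n×n unit-primitive matrix A_n has exactly the n distinct eigenvalues (−1)^{n+1} / (2cos((2j−1)π/(2n+1))) for j = 1, …, n; equivalently det(xI_n − A_n) = Π_{j=1}^{n} (x − (−1)^{n+1}(2cos((2j−1)π/(2n+1)))^{−1}). -/

import Mathlib

open Matrix Real

/-- The `n × n` unit-primitive matrix: entry `(i,j)` (1-based) is 1 iff `i + j ≤ n + 1`. -/
def A (n : ℕ) : Matrix (Fin n) (Fin n) ℝ :=
  Matrix.of fun i j => if (i : ℕ) + (j : ℕ) + 1 ≤ n then 1 else 0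

private lemma sum_cos_eq (α : ℝ) (M : ℕ) :
    2 * Real.sin (α / 2) * ∑ k ∈ Finset.range M, Real.cos (((k : ℝ) + 1/2) * α)
      = Real.sin ((M : ℝ) * α) := by
  induction M with
  | zero => simp
  | succ M ih =>
    rw [Finset.sum_range_succ, mul_add, ih]
    have h := Real.sin_sub_sin (((M : ℝ) + 1) * α) ((M : ℝ) * α)
    have e1 : ((((M : ℝ) + 1) * α) - (M : ℝ) * α) / 2 = α / 2 := by ring
    have e2 : ((((M : ℝ) + 1) * α) + (M : ℝ) * α) / 2 = ((M : ℝ) + 1/2) * α := by ring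
    rw [e1, e2] at h
    push_cast
    linarith

private lemma sin_shift (m : ℤ) (β : ℝ) :
    Real.sin ((2 * (m : ℝ) + 1) * Real.pi / 2 - β) = (-1 : ℝ) ^ m * Real.cos β := by
  have h1 : Real.cos ((m : ℝ) * Real.pi) = (-1 : ℝ) ^ m := by
    simpa using Real.cos_int_mul_pi_sub 0 m
  have h2 : Real.sin ((m : ℝ) * Real.pi) = 0 := Real.sin_int_mul_pi m
  have e : (2 * (m : ℝ) + 1) * Real.pi / 2 - β = (m : ℝ) * Real.pi + (Real.pi / 2 - β) := by
    ring
  rw [e, Real.sin_add, h1, h2, Real.sin_pi_div_two_sub]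
  ring

private lemma eig (n : ℕ) (hn : 0 < n) (m : ℤ) (α : ℝ)
    (hα : (2 * (n : ℝ) + 1) * α = (2 * (m : ℝ) + 1) * Real.pi)
    (hs : Real.sin (α / 2) ≠ 0) (hc : Real.cos (α / 2) ≠ 0) :
    ((((-1 : ℝ) ^ m * (2 * Real.sin (α / 2))⁻¹) • (1 : Matrix (Fin n) (Fin n) ℝ) - A n)).det
      = 0 := by
  set μ : ℝ := (-1 : ℝ) ^ m * (2 * Real.sin (α / 2))⁻¹ with hμ
  set v : Fin n → ℝ := fun k => Real.cos ((((k : ℕ) : ℝ) + 1/2) * α) with hv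
  rw [← Matrix.exists_mulVec_eq_zero_iff]
  refine ⟨v, ?_, ?_⟩
  · intro h0
    apply hc
    have h0' := congrFun h0 ⟨0, hn⟩
    simp only [hv, Pi.zero_apply] at h0'
    have hz : (((⟨0, hn⟩ : Fin n) : ℕ) : ℝ) = 0 := by simp
    rw [hz, show ((0 : ℝ) + 1/2) * α = α / 2 by ring] at h0'
    exact h0' 
  · funext i
    show ∑ k, (μ • (1 : Matrix (Fin n) (Fin n) ℝ) - A n) i k * v k = 0
    have expand : ∀ k : Fin n, (μ • (1 : Matrix (Fin n) (Fin n) ℝ) - A n) i k * v k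
        = μ * (if i = k then v k else 0)
          - (if (i : ℕ) + (k : ℕ) + 1 ≤ n then (1:ℝ) else 0) * v k := by
      intro k
      by_cases h : i = k <;>
        simp [Matrix.sub_apply, Matrix.smul_apply, Matrix.one_apply, A, h, sub_mul]
    rw [Finset.sum_congr rfl fun k _ => expand k, Finset.sum_sub_distrib,
      ← Finset.mul_sum, Finset.sum_ite_eq]
    simp only [Finset.mem_univ, if_true]
    have hS : (∑ k : Fin n, (if (i : ℕ) + (k : ℕ) + 1 ≤ n then (1:ℝ) else 0) * v k)
        = ∑ k ∈ Finset.range (n - (i : ℕ)), Real.cos (((k : ℝ) + 1/2) * α) := by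
      rw [hv, Fin.sum_univ_eq_sum_range
        (fun k => (if (i : ℕ) + k + 1 ≤ n then (1:ℝ) else 0)
          * Real.cos (((k : ℝ) + 1/2) * α)) n]
      have hfilter : (Finset.range n).filter (fun k => k < n - (i : ℕ))
          = Finset.range (n - (i : ℕ)) := by
        ext k
        simp only [Finset.mem_filter, Finset.mem_range]
        omega
      have hcg : ∀ k ∈ Finset.range n, (if (i : ℕ) + k + 1 ≤ n then (1:ℝ) else 0)
          * Real.cos (((k : ℝ) + 1/2) * α)
          = if k < n - (i : ℕ) then Real.cos (((k : ℝ) + 1/2) * α) else 0 := by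
        intro k hk
        by_cases h : (i : ℕ) + k + 1 ≤ n
        · rw [if_pos h, if_pos (by omega), one_mul]
        · rw [if_neg h, if_neg (by omega), zero_mul]
      rw [Finset.sum_congr rfl hcg, ← Finset.sum_filter, hfilter]
    rw [hS]
    have h2 := sum_cos_eq α (n - (i : ℕ))
    have hcast : (((n - (i : ℕ) : ℕ)) : ℝ) = (n : ℝ) - ((i : ℕ) : ℝ) := by
      rw [Nat.cast_sub i.isLt.le]
    have hangle : ((n : ℝ) - ((i : ℕ) : ℝ)) * α
        = (2 * (m : ℝ) + 1) * Real.pi / 2 - ((((i : ℕ)) : ℝ) + 1/2) * α := by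
      linear_combination hα / 2
    rw [hcast, hangle, sin_shift] at h2
    have h3 : (∑ k ∈ Finset.range (n - (i : ℕ)), Real.cos (((k : ℝ) + 1/2) * α))
        = μ * v i := by
      have h2s : (2 * Real.sin (α / 2)) ≠ 0 := mul_ne_zero two_ne_zero hs
      apply mul_left_cancel₀ h2s
      rw [h2, hμ, hv]
      field_simp
    rw [h3, sub_self]

theorem A_eigenvalues (n : ℕ) (hn : 0 < n) :
    Function.Injective
        (fun j : Fin n =>
          (-1 : ℝ) ^ (n + 1) * (2 * Real.cos ((2 * (j : ℕ) + 1) * Real.pi / (2 * n + 1)))⁻¹) ∧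
      ∀ x : ℝ,
        (x • (1 : Matrix (Fin n) (Fin n) ℝ) - A n).det =
          ∏ j : Fin n,
            (x - (-1 : ℝ) ^ (n + 1) *
              (2 * Real.cos ((2 * (j : ℕ) + 1) * Real.pi / (2 * n + 1)))⁻¹) := by
  have hπ := Real.pi_pos
  set θ : Fin n → ℝ := fun j => (2 * ((j : ℕ) : ℝ) + 1) * Real.pi / (2 * (n : ℝ) + 1) with hθdef
  set lam : Fin n → ℝ := fun j => (-1 : ℝ) ^ (n + 1) * (2 * Real.cos (θ j))⁻¹ with hlamdef
  have hden : (2 * (n : ℝ) + 1) ≠ 0 := by positivity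
  have hθpos : ∀ j : Fin n, 0 < θ j := by
    intro j
    apply div_pos (by positivity) (by positivity)
  have hθlt : ∀ j : Fin n, θ j < Real.pi := by
    intro j
    rw [hθdef, div_lt_iff₀ (by positivity)]
    have : ((j : ℕ) : ℝ) < (n : ℝ) := by exact_mod_cast j.isLt
    nlinarith
  -- cos (θ j) ≠ 0
  have hcosne : ∀ j : Fin n, Real.cos (θ j) ≠ 0 := by
    intro j h
    rw [Real.cos_eq_zero_iff] at h
    obtain ⟨k, hk⟩ := h
    simp only [hθdef] at hk
    rw [div_eq_div_iff hden (by norm_num : (2:ℝ) ≠ 0)] at hk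
    have hr : Real.pi * (2 * (2 * ((j : ℕ) : ℝ) + 1))
        = Real.pi * ((2 * (k : ℝ) + 1) * (2 * (n : ℝ) + 1)) := by
      linear_combination hk
    have hr2 : (2 * (2 * ((j : ℕ) : ℤ) + 1) : ℝ)
        = ((2 * (k : ℤ) + 1) * (2 * ((n : ℕ) : ℤ)  + 1) : ℝ) := by
      push_cast
      linear_combination mul_left_cancel₀ (ne_of_gt hπ) hr
    have hz : 2 * (2 * ((j : ℕ) : ℤ) + 1) = (2 * k + 1) * (2 * ((n : ℕ) : ℤ) + 1) := by
      exact_mod_cast hr2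
    have heven : Even (2 * (2 * ((j : ℕ) : ℤ) + 1)) := ⟨2 * (j : ℕ) + 1, by ring⟩
    rw [hz] at heven
    have hodd : Odd ((2 * k + 1) * (2 * ((n : ℕ) : ℤ) + 1)) :=
      ⟨2 * k * (n : ℕ) + k + (n : ℕ), by ring⟩
    exact (Int.not_odd_iff_even.mpr heven) hodd
  -- injectivity
  have hinj : Function.Injective lam := by
    intro j k h
    have h1 : (2 * Real.cos (θ j))⁻¹ = (2 * Real.cos (θ k))⁻¹ :=
      mul_left_cancel₀ (pow_ne_zero _ (by norm_num)) h
    have h2 : Real.cos (θ j) = Real.cos (θ k) := by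
      have := inv_injective h1
      linarith
    have h3 : θ j = θ k :=
      Real.injOn_cos ⟨(hθpos j).le, (hθlt j).le⟩ ⟨(hθpos k).le, (hθlt k).le⟩ h2
    have h4 : ((j : ℕ) : ℝ) = ((k : ℕ) : ℝ) := by
      have h5 : (2 * ((j : ℕ) : ℝ) + 1) * Real.pi = (2 * ((k : ℕ) : ℝ) + 1) * Real.pi := by
        have h6 := congrArg (fun y : ℝ => y * (2 * (n : ℝ) + 1)) h3
        simp only [hθdef, div_mul_cancel₀ _ hden] at h6
        exact h6
      have h7 := mul_right_cancel₀ (ne_of_gt hπ) h5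
      linarith
    have : (j : ℕ) = (k : ℕ) := by exact_mod_cast h4
    exact Fin.ext this
  refine ⟨hinj, ?_⟩
  -- each lam j is a root of the characteristic polynomial
  have hroot : ∀ j : Fin n, ((lam j) • (1 : Matrix (Fin n) (Fin n) ℝ) - A n).det = 0 := by
    intro j
    have hα : (2 * (n : ℝ) + 1) * (Real.pi - 2 * θ j)
        = (2 * (((n : ℤ) - 2 * (j : ℕ) - 1 : ℤ) : ℝ) + 1) * Real.pi := by
      have : (2 * (n : ℝ) + 1) * θ j = (2 * ((j : ℕ) : ℝ) + 1) * Real.pi := by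
        simp only [hθdef]
        rw [mul_comm, div_mul_cancel₀ _ hden]
      push_cast
      linarith [this]
    have hshalf : (Real.pi - 2 * θ j) / 2 = Real.pi / 2 - θ j := by ring
    have hsin : Real.sin ((Real.pi - 2 * θ j) / 2) = Real.cos (θ j) := by
      rw [hshalf, Real.sin_pi_div_two_sub]
    have hcos : Real.cos ((Real.pi - 2 * θ j) / 2) = Real.sin (θ j) := by
      rw [hshalf, Real.cos_pi_div_two_sub]
    have hsinθ : Real.sin (θ j) ≠ 0 :=
      ne_of_gt (Real.sin_pos_of_pos_of_lt_pi (hθpos j) (hθlt j))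
    have hpow : ((-1 : ℝ) ^ ((n : ℤ) - 2 * (j : ℕ) - 1 : ℤ)) = (-1 : ℝ) ^ (n + 1) := by
      rcases Nat.even_or_odd n with he | ho
      · have h1 : Odd ((n : ℤ) - 2 * (j : ℕ) - 1) := by
          rcases he with ⟨t, ht⟩
          exact ⟨(t : ℤ) - (j : ℕ) - 1, by push_cast [ht]; ring⟩
        rw [h1.neg_one_zpow, (he.add_one).neg_one_pow]
      · have h1 : Even ((n : ℤ) - 2 * (j : ℕ) - 1) := by
          rcases ho with ⟨t, ht⟩
          exact ⟨(t : ℤ) - (j : ℕ), by push_cast [ht]; ring⟩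
        rw [h1.neg_one_zpow, (ho.add_one).neg_one_pow]
    have := eig n hn ((n : ℤ) - 2 * (j : ℕ) - 1) (Real.pi - 2 * θ j) hα
      (by rw [hsin]; exact hcosne j) (by rw [hcos]; exact hsinθ)
    rw [hsin, hpow] at this
    exact this
  -- polynomial identity
  classical
  set P : Polynomial ℝ := ∏ j : Fin n, (Polynomial.X - Polynomial.C (lam j)) with hP
  have hPmonic : P.Monic :=
    Polynomial.monic_prod_of_monic _ _ fun j _ => Polynomial.monic_X_sub_C _
  have hPdeg : P.natDegree = n := by
    rw [hP, Polynomial.natDegree_prod _ _ fun j _ => Polynomial.X_sub_C_ne_zero _]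
    simp
  have hchmonic : (A n).charpoly.Monic := Matrix.charpoly_monic _
  have hchdeg : (A n).charpoly.natDegree = n := by
    rw [Matrix.charpoly_natDegree_eq_dim]
    simp
  have heval : ∀ x : ℝ, ((A n).charpoly).eval x
      = (x • (1 : Matrix (Fin n) (Fin n) ℝ) - A n).det := by
    intro x
    rw [Matrix.charpoly, ← Polynomial.coe_evalRingHom, RingHom.map_det]
    congr 1
    ext i k
    by_cases h : i = k <;>
      simp [Matrix.charmatrix_apply, Matrix.one_apply, Matrix.sub_apply, Matrix.smul_apply,
        Matrix.diagonal_apply, h]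
  have hdiff : (A n).charpoly - P = 0 := by
    by_cases h0 : (A n).charpoly - P = 0
    · exact h0
    apply Polynomial.eq_zero_of_natDegree_lt_card_of_eval_eq_zero _ hinj
    · intro j
      rw [Polynomial.eval_sub, heval, hroot j, hP, Polynomial.eval_prod]
      rw [Finset.prod_eq_zero (Finset.mem_univ j)]
      · ring
      · simp
    · have hdd : ((A n).charpoly - P).degree < (A n).charpoly.degree :=
        Polynomial.degree_sub_lt
          (by
            rw [Polynomial.degree_eq_natDegree hchmonic.ne_zero,
              Polynomial.degree_eq_natDegree hPmonic.ne_zero, hPdeg, hchdeg])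
          hchmonic.ne_zero
          (by rw [hchmonic.leadingCoeff, hPmonic.leadingCoeff])
      have := Polynomial.natDegree_lt_iff_degree_lt h0 |>.mpr
        (by rwa [Polynomial.degree_eq_natDegree hchmonic.ne_zero, hchdeg] at hdd)
      simpa using this
  have hp : (A n).charpoly = P := by
    have := sub_eq_zero.mp hdiff
    exact this
  intro x
  rw [← heval x, hp, hP, Polynomial.eval_prod]
  simp [hlamdef, hθdef]
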